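/- Let C : D(C) ⊆ H → Y be closed and densely defined, and B : Y → X bounded with C*B* densely defined. Then the block operator matrix [[0, -C*B*],[closure(BC), 0]] on H ⊕ X is skew-selfadjoint (i.e. its adjoint equals its negative). -/

import Mathlib

open LinearPMap

variable {H Y X : Type*}
  [NormedAddCommGroup H] [InnerProductSpace ℝ H] [CompleteSpace H]
  [NormedAddCommGroup Y] [InnerProductSpace ℝ Y] [CompleteSpace Y]
  [NormedAddCommGroup X] [InnerProductSpace ℝ X] [CompleteSpace X]

/-- The composition `B ∘ C` of a bounded operator `B` with a partially defined operator `C`;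
its domain is `D(C)`. -/
noncomputable def clmCompPMap (B : Y →L[ℝ] X) (C : H →ₗ.[ℝ] Y) : H →ₗ.[ℝ] X :=
  { domain := C.domain
    toFun := (B : Y →ₗ[ℝ] X).comp C.toFun }

/-- The composition `T ∘ B` of a partially defined operator `T` with a bounded operator `B`;
its domain is `{x | B x ∈ D(T)}`. -/
noncomputable def pMapCompCLM (T : Y →ₗ.[ℝ] H) (B : X →L[ℝ] Y) : X →ₗ.[ℝ] H :=
  { domain := T.domain.comap (B : X →ₗ[ℝ] Y)
    toFun := T.toFun.comp ((B : X →ₗ[ℝ] Y).restrict fun _ hx => hx) }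

/-- First projection from the product of two submodules. -/
def prodFst {p : Submodule ℝ H} {q : Submodule ℝ X} : ↥(p.prod q) →ₗ[ℝ] ↥p where
  toFun u := ⟨u.1.1, u.2.1⟩
  map_add' _ _ := rfl
  map_smul' _ _ := rfl

/-- Second projection from the product of two submodules. -/
def prodSnd {p : Submodule ℝ H} {q : Submodule ℝ X} : ↥(p.prod q) →ₗ[ℝ] ↥q where
  toFun u := ⟨u.1.2, u.2.2⟩
  map_add' _ _ := rfl
  map_smul' _ _ := rfl

/-- The block operator matrix `[[0, -S],[T, 0]]` on the Hilbert space direct sum `H ⊕ X`,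
with domain `D(T) ⊕ D(S)`, where `S : D(S) ⊆ X → H` and `T : D(T) ⊆ H → X`. -/
noncomputable def blockOff (S : X →ₗ.[ℝ] H) (T : H →ₗ.[ℝ] X) :
    (WithLp 2 (H × X)) →ₗ.[ℝ] (WithLp 2 (H × X)) :=
  { domain := (T.domain.prod S.domain).comap
      ((WithLp.linearEquiv 2 ℝ (H × X)) : WithLp 2 (H × X) →ₗ[ℝ] H × X)
    toFun := ((WithLp.linearEquiv 2 ℝ (H × X)).symm : H × X →ₗ[ℝ] WithLp 2 (H × X)).comp
      ((LinearMap.prod ((-S.toFun).comp prodSnd) (T.toFun.comp prodFst)).comp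
        (((WithLp.linearEquiv 2 ℝ (H × X)) : WithLp 2 (H × X) →ₗ[ℝ] H × X).restrict
          fun _ hx => hx)) }

open RealInnerProductSpace

/-- If `(v, t)` lies in the closure of the graph of `f` and `(y, w)` is a formal adjoint pair
for `f`, then the pairing identity extends. -/
theorem aux_inner_closure {f : H →ₗ.[ℝ] X} {v : H} {t : X}
    (hvt : (v, t) ∈ closure (f.graph : Set (H × X))) {y : X} {w : H}
    (hy : ∀ u : f.domain, ⟪w, (u : H)⟫ = ⟪y, f u⟫) :
    ⟪w, v⟫ = ⟪y, t⟫ := by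
  have hcl : IsClosed {p : H × X | ⟪w, p.1⟫ = ⟪y, p.2⟫} :=
    isClosed_eq (continuous_const.inner continuous_fst) (continuous_const.inner continuous_snd)
  have hsub : (f.graph : Set (H × X)) ⊆ {p : H × X | ⟪w, p.1⟫ = ⟪y, p.2⟫} := by
    rintro ⟨a, b⟩ hab
    rcases f.mem_graph_iff.mp hab with ⟨u, hu1, hu2⟩
    simp only [Set.mem_setOf_eq] at *
    rw [← hu1, ← hu2]
    exact hy u
  exact closure_minimal hsub hcl hvt

/-- The von Neumann step: any pair satisfying the adjoint pairing against the whole adjoint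
lies in the closure of the graph. -/
theorem aux_mem_closure_graph {f : H →ₗ.[ℝ] X} (hf : Dense (f.domain : Set H)) {v : H} {t : X}
    (h : ∀ y : f.adjoint.domain, ⟪t, (y : X)⟫ = ⟪v, f.adjoint y⟫) :
    (v, t) ∈ closure (f.graph : Set (H × X)) := by
  classical
  set ψ : WithLp 2 (H × X) ≃L[ℝ] H × X := WithLp.prodContinuousLinearEquiv 2 ℝ H X with hψ
  set K0 : Submodule ℝ (WithLp 2 (H × X)) :=
    f.graph.comap (ψ.toLinearEquiv : WithLp 2 (H × X) →ₗ[ℝ] H × X) with hK0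
  set K : Submodule ℝ (WithLp 2 (H × X)) := K0.topologicalClosure with hK
  haveI : CompleteSpace K := K0.isClosed_topologicalClosure.completeSpace_coe
  set u0 : WithLp 2 (H × X) := ψ.symm (v, t) with hu0
  set P : WithLp 2 (H × X) := (K.starProjection u0 : WithLp 2 (H × X)) with hP
  set w : WithLp 2 (H × X) := u0 - P with hw
  have hwK : w ∈ Kᗮ := K.sub_starProjection_mem_orthogonal u0
  -- the graph elements lie in K
  have hgraph : ∀ u : f.domain, ψ.symm ((u : H), f u) ∈ K := by
    intro u
    apply Submodule.le_topologicalClosure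
    show ψ (ψ.symm ((u : H), f u)) ∈ f.graph
    rw [ψ.apply_symm_apply]
    exact f.mem_graph u
  -- hence the pairing identity for w
  have hpair : ∀ u : f.domain, ⟪-w.fst, (u : H)⟫ = ⟪w.snd, f u⟫ := by
    intro u
    have h0 : ⟪ψ.symm ((u : H), f u), w⟫ = 0 :=
      (Submodule.mem_orthogonal K w).mp hwK _ (hgraph u)
    have h1 : ⟪(u : H), w.fst⟫ + ⟪f u, w.snd⟫ = 0 := h0
    have c1 : ⟪(u : H), w.fst⟫ = ⟪w.fst, (u : H)⟫ := real_inner_comm _ _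
    have c2 : ⟪f u, w.snd⟫ = ⟪w.snd, f u⟫ := real_inner_comm _ _
    rw [inner_neg_left]
    linarith
  have hb : w.snd ∈ f.adjoint.domain :=
    mem_adjoint_domain_of_exists _ ⟨-w.fst, hpair⟩
  have hfb : f.adjoint ⟨w.snd, hb⟩ = -w.fst := adjoint_apply_eq hf ⟨w.snd, hb⟩ hpair
  have hu0w : ⟪u0, w⟫ = 0 := by
    have h2 : ⟪t, w.snd⟫ = ⟪v, -w.fst⟫ := by
      have := h ⟨w.snd, hb⟩
      rwa [hfb] at this
    have h3 : ⟪u0, w⟫ = ⟪v, w.fst⟫ + ⟪t, w.snd⟫ := rfl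
    rw [h3, h2, inner_neg_right]
    ring
  have hPw : ⟪P, w⟫ = 0 :=
    (Submodule.mem_orthogonal K w).mp hwK P (K.starProjection_apply_mem u0)
  have hww : ⟪w, w⟫ = 0 := by
    rw [hw, inner_sub_left, hu0w, hPw]
    ring
  have hw0 : w = 0 := by
    rwa [inner_self_eq_zero] at hww
  have hu0K : u0 ∈ K := by
    have : u0 = P := by
      have := hw
      rw [hw0] at this
      exact (sub_eq_zero.mp this.symm)
    rw [this]
    exact (K.starProjection_apply_mem u0)
  -- transfer back
  have hKset : (K : Set (WithLp 2 (H × X))) = ψ ⁻¹' closure (f.graph : Set (H × X)) := by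
    rw [hK, Submodule.topologicalClosure_coe]
    have h5 : (K0 : Set (WithLp 2 (H × X))) = ψ.toHomeomorph ⁻¹' (f.graph : Set (H × X)) := rfl
    rw [h5, ← ψ.toHomeomorph.preimage_closure]
    rfl
  have : u0 ∈ ψ ⁻¹' closure (f.graph : Set (H × X)) := by
    rw [← hKset]; exact hu0K
  have h4 : ψ u0 ∈ closure (f.graph : Set (H × X)) := this
  rwa [hu0, ψ.apply_symm_apply] at h4

theorem aux_adjoint_eq (C : H →ₗ.[ℝ] Y) (hCdense : Dense (C.domain : Set H)) (B : Y →L[ℝ] X) :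
    (clmCompPMap B C).adjoint = pMapCompCLM C.adjoint (ContinuousLinearMap.adjoint B) := by
  have hfd : Dense ((clmCompPMap B C).domain : Set H) := hCdense
  have hform : ∀ (x : X) (hx : ContinuousLinearMap.adjoint B x ∈ C.adjoint.domain)
      (u : (clmCompPMap B C).domain),
      ⟪(C.adjoint ⟨ContinuousLinearMap.adjoint B x, hx⟩ : H), (u : H)⟫ =
        ⟪x, clmCompPMap B C u⟫ := by
    intro x hx u
    have h1 : ⟪(C.adjoint ⟨ContinuousLinearMap.adjoint B x, hx⟩ : H), (u : H)⟫ =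
        ⟪ContinuousLinearMap.adjoint B x, C u⟫ :=
      adjoint_isFormalAdjoint hCdense ⟨ContinuousLinearMap.adjoint B x, hx⟩ u
    rw [h1]
    exact ContinuousLinearMap.adjoint_inner_left B (C u) x
  apply LinearPMap.ext
  · ext x
    constructor
    · intro hx
      show ContinuousLinearMap.adjoint B x ∈ C.adjoint.domain
      apply mem_adjoint_domain_of_exists
      refine ⟨(clmCompPMap B C).adjoint ⟨x, hx⟩, fun u => ?_⟩
      have h1 : ⟪((clmCompPMap B C).adjoint ⟨x, hx⟩ : H), (u : H)⟫ =
          ⟪x, clmCompPMap B C ⟨u, u.2⟩⟫ := adjoint_isFormalAdjoint hfd ⟨x, hx⟩ ⟨u, u.2⟩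
      rw [h1]
      exact (ContinuousLinearMap.adjoint_inner_left B (C u) x).symm
    · intro hx
      exact mem_adjoint_domain_of_exists _
        ⟨C.adjoint ⟨ContinuousLinearMap.adjoint B x, hx⟩, hform x hx⟩
  · intro x₀ hx₀ hy₀
    let x : (clmCompPMap B C).adjoint.domain := ⟨x₀, hx₀⟩
    let y : (pMapCompCLM C.adjoint (ContinuousLinearMap.adjoint B)).domain := ⟨x₀, hy₀⟩
    have hxy : (x : X) = y := rfl
    show (clmCompPMap B C).adjoint x = pMapCompCLM C.adjoint (ContinuousLinearMap.adjoint B) y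
    have hy : ContinuousLinearMap.adjoint B (y : X) ∈ C.adjoint.domain := y.2
    have := adjoint_apply_eq hfd x (x₀ := C.adjoint ⟨ContinuousLinearMap.adjoint B (y : X), hy⟩)
      (by exact hform (y : X) hy)
    rw [this]
    rfl

/-- Let `C` be closed and densely defined from `H` to `Y`, `B : Y → X` bounded with `C* B*`
densely defined.  Then the block operator matrix `[[0, -C* B*],[closure(BC), 0]]` on `H ⊕ X`
is skew-selfadjoint, i.e. its adjoint equals its negative. -/
theorem blockOff_skewAdjoint (C : H →ₗ.[ℝ] Y) (hC : C.IsClosed)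
    (hCdense : Dense (C.domain : Set H)) (B : Y →L[ℝ] X)
    (hdense : Dense ((pMapCompCLM C.adjoint (ContinuousLinearMap.adjoint B)).domain : Set X)) :
    (blockOff (pMapCompCLM C.adjoint (ContinuousLinearMap.adjoint B))
        ((clmCompPMap B C).closure)).adjoint =
      -(blockOff (pMapCompCLM C.adjoint (ContinuousLinearMap.adjoint B))
        ((clmCompPMap B C).closure)) := by
  classical
  set Sop := pMapCompCLM C.adjoint (ContinuousLinearMap.adjoint B) with hSop
  set f := clmCompPMap B C with hfdef
  set T := f.closure with hTdef
  set A := blockOff Sop T with hAdef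
  have hfd : Dense (f.domain : Set H) := hCdense
  have hadj : f.adjoint = Sop := aux_adjoint_eq C hCdense B
  -- the formal adjoint pairing on `D(Sop) × D(f)`
  have hSform : ∀ (y : Sop.domain) (u : f.domain), ⟪(Sop y : H), (u : H)⟫ = ⟪(y : X), f u⟫ := by
    intro y u
    have h1 : Sop y = C.adjoint ⟨ContinuousLinearMap.adjoint B (y : X), y.2⟩ := rfl
    have h2 : ⟪(C.adjoint ⟨ContinuousLinearMap.adjoint B (y : X), y.2⟩ : H), (u : H)⟫ =
        ⟪ContinuousLinearMap.adjoint B (y : X), C ⟨(u : H), u.2⟩⟫ :=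
      adjoint_isFormalAdjoint hCdense ⟨ContinuousLinearMap.adjoint B (y : X), y.2⟩ ⟨(u : H), u.2⟩
    rw [h1, h2]
    exact ContinuousLinearMap.adjoint_inner_left B (C ⟨(u : H), u.2⟩) (y : X)
  -- `f` is closable
  have hclosable : f.IsClosable := by
    refine ⟨f.graph.topologicalClosure.toLinearPMap,
      (Submodule.toLinearPMap_graph_eq _ ?_).symm⟩
    rintro ⟨a, b⟩ hab ha0
    rw [← SetLike.mem_coe, Submodule.topologicalClosure_coe] at hab
    have hzero : ∀ y : Sop.domain, ⟪(y : X), b⟫ = 0 := by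
      intro y
      have h3 := aux_inner_closure hab (fun u => hSform y u)
      have ha : a = (0 : H) := ha0
      rw [ha, inner_zero_right] at h3
      exact h3.symm
    exact hdense.eq_zero_of_inner_right ℝ (fun v hv => hzero ⟨v, hv⟩)
  have hTgraph : (T.graph : Set (H × X)) = closure (f.graph : Set (H × X)) := by
    rw [hTdef, ← hclosable.graph_closure_eq_closure_graph, Submodule.topologicalClosure_coe]
  -- the pairing on `D(T) × D(Sop)`
  have hTS : ∀ (u : T.domain) (y : Sop.domain), ⟪(Sop y : H), (u : H)⟫ = ⟪(y : X), T u⟫ := by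
    intro u y
    have hmem : ((u : H), T u) ∈ closure (f.graph : Set (H × X)) := by
      rw [← hTgraph]; exact T.mem_graph u
    exact aux_inner_closure hmem (fun u' => hSform y u')
  -- density of the domain of `A`
  have hTdense : Dense (T.domain : Set H) := hfd.mono f.le_closure.1
  have hAdense : Dense (A.domain : Set (WithLp 2 (H × X))) := by
    have hprod : Dense ((T.domain : Set H) ×ˢ (Sop.domain : Set X)) := hTdense.prod hdense
    have hset : (A.domain : Set (WithLp 2 (H × X))) =
        (WithLp.prodContinuousLinearEquiv 2 ℝ H X).toHomeomorph ⁻¹'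
          ((T.domain : Set H) ×ˢ (Sop.domain : Set X)) := rfl
    rw [dense_iff_closure_eq, hset, ← Homeomorph.preimage_closure,
      hprod.closure_eq, Set.preimage_univ]
  -- `-A` is a formal adjoint of `A`
  have hformal : A.IsFormalAdjoint (-A) := by
    rintro ⟨x, hx⟩ ⟨y, hy⟩
    have hx1 : x.fst ∈ T.domain := hx.1
    have hx2 : x.snd ∈ Sop.domain := hx.2
    have hy1 : y.fst ∈ T.domain := hy.1
    have hy2 : y.snd ∈ Sop.domain := hy.2
    show ⟪-(Sop ⟨x.snd, hx2⟩ : H), y.fst⟫ + ⟪(T ⟨x.fst, hx1⟩ : X), y.snd⟫ =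
      ⟪x.fst, -(-(Sop ⟨y.snd, hy2⟩ : H))⟫ + ⟪x.snd, -(T ⟨y.fst, hy1⟩ : X)⟫
    have c1 := hTS ⟨x.fst, hx1⟩ ⟨y.snd, hy2⟩
    have c2 := hTS ⟨y.fst, hy1⟩ ⟨x.snd, hx2⟩
    have r1 := real_inner_comm (Sop ⟨y.snd, hy2⟩ : H) x.fst
    have r2 := real_inner_comm ((y.snd : X)) (T ⟨x.fst, hx1⟩ : X)
    have r3 := real_inner_comm ((x.snd : X)) (T ⟨y.fst, hy1⟩ : X)
    simp only [inner_neg_left, inner_neg_right, neg_neg]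
    linarith
  have h1 : -A ≤ A.adjoint := hformal.le_adjoint hAdense
  -- the key surjectivity-type step
  have key : ∀ (vy : WithLp 2 (H × X)) (hvy : vy ∈ A.adjoint.domain),
      ∃ hmem : vy ∈ A.domain, A.adjoint ⟨vy, hvy⟩ = -(A ⟨vy, hmem⟩) := by
    intro vy hvy
    set z := A.adjoint ⟨vy, hvy⟩ with hz
    have hkey : ∀ u : A.domain, ⟪z, (u : WithLp 2 (H × X))⟫ = ⟪vy, A u⟫ :=
      fun u => adjoint_isFormalAdjoint hAdense ⟨vy, hvy⟩ u
    -- Part 1: `B† vy.snd ∈ D(C†)` with value `z.fst`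
    have hB : ∀ u1 : C.domain,
        ⟪z.fst, (u1 : H)⟫ = ⟪ContinuousLinearMap.adjoint B vy.snd, C u1⟫ := by
      intro u1
      have hu1T : (u1 : H) ∈ T.domain := f.le_closure.1 u1.2
      have humem : ((WithLp.linearEquiv 2 ℝ (H × X)).symm ((u1 : H), (0 : X))) ∈ A.domain :=
        ⟨hu1T, Sop.domain.zero_mem⟩
      have h6 : ⟪z.fst, (u1 : H)⟫ + ⟪z.snd, (0 : X)⟫ =
          ⟪vy.fst, -(Sop ⟨(0 : X), Sop.domain.zero_mem⟩ : H)⟫ +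
            ⟪vy.snd, (T ⟨(u1 : H), hu1T⟩ : X)⟫ := hkey ⟨_, humem⟩
      have hS0 : Sop ⟨(0 : X), Sop.domain.zero_mem⟩ = 0 := Sop.map_zero
      have hTu1 : T ⟨(u1 : H), hu1T⟩ = B (C u1) := (f.le_closure.2 rfl).symm
      rw [hS0, neg_zero, inner_zero_right, inner_zero_right, hTu1] at h6
      rw [← ContinuousLinearMap.adjoint_inner_left B (C u1) vy.snd] at h6
      linarith
    have hySmem : ContinuousLinearMap.adjoint B vy.snd ∈ C.adjoint.domain :=
      mem_adjoint_domain_of_exists _ ⟨z.fst, hB⟩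
    have hSval : C.adjoint ⟨ContinuousLinearMap.adjoint B vy.snd, hySmem⟩ = z.fst :=
      adjoint_apply_eq hCdense _ hB
    -- Part 2: `(vy.fst, -z.snd)` belongs to the closure of the graph of `f`
    have hX2 : ∀ ys : Sop.domain, ⟪-z.snd, (ys : X)⟫ = ⟪vy.fst, (Sop ys : H)⟫ := by
      intro ys
      have humem : ((WithLp.linearEquiv 2 ℝ (H × X)).symm ((0 : H), (ys : X))) ∈ A.domain :=
        ⟨T.domain.zero_mem, ys.2⟩
      have h6 : ⟪z.fst, (0 : H)⟫ + ⟪z.snd, (ys : X)⟫ =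
          ⟪vy.fst, -(Sop ⟨(ys : X), ys.2⟩ : H)⟫ +
            ⟪vy.snd, (T ⟨(0 : H), T.domain.zero_mem⟩ : X)⟫ := hkey ⟨_, humem⟩
      have hT0 : T ⟨(0 : H), T.domain.zero_mem⟩ = 0 := T.map_zero
      have hys : Sop ⟨(ys : X), ys.2⟩ = Sop ys := rfl
      rw [hT0, inner_zero_right, inner_zero_right, inner_neg_right, hys] at h6
      rw [inner_neg_left]
      linarith
    have hvN : (vy.fst, -z.snd) ∈ closure (f.graph : Set (H × X)) := by
      apply aux_mem_closure_graph hfd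
      rw [hadj]
      exact hX2
    rw [← hTgraph] at hvN
    rcases T.mem_graph_iff.mp hvN with ⟨uT, huT1, huT2⟩
    have hvyT : vy.fst ∈ T.domain := (show (uT : H) = vy.fst from huT1) ▸ uT.2
    have hTval : T ⟨vy.fst, hvyT⟩ = -z.snd := by
      have he : (⟨vy.fst, hvyT⟩ : T.domain) = uT := Subtype.ext huT1.symm
      rw [he, huT2]
    refine ⟨⟨hvyT, hySmem⟩, ?_⟩
    apply (WithLp.prodContinuousLinearEquiv 2 ℝ H X).injective
    refine Prod.ext ?_ ?_
    · show z.fst = -(-(Sop ⟨vy.snd, hySmem⟩ : H))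
      rw [neg_neg]
      exact hSval.symm
    · show z.snd = -(T ⟨vy.fst, hvyT⟩ : X)
      rw [hTval, neg_neg]
  have h2 : A.adjoint ≤ -A := by
    refine ⟨fun vy hvy => (key vy hvy).1, fun x y hxy => ?_⟩
    obtain ⟨hmem, hval⟩ := key x x.2
    have he : (⟨(x : WithLp 2 (H × X)), hmem⟩ : A.domain) = ⟨(y : _), y.2⟩ := Subtype.ext hxy
    calc A.adjoint x = -(A ⟨(x : WithLp 2 (H × X)), hmem⟩) := hval
    _ = -(A ⟨(y : WithLp 2 (H × X)), y.2⟩) := by rw [he]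
    _ = (-A) y := rfl
  exact le_antisymm h2 h1
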